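/- If X and Y are n×n Hermitian matrices with e^{iX} = e^{iY} and the spectral (operator) norm of X is at most π, then |X| ≤ |Y| in the Löwner order, where |A| = √(A*A). -/

import Mathlib

open Matrix
open scoped ComplexOrder

noncomputable section

/-- n×n complex matrices -/
abbrev Mat (n : ℕ) := Matrix (Fin n) (Fin n) ℂ

/-- the former `Matrix.PosSemidef.sqrt` (removed from Mathlib), with its old definition -/
noncomputable def psdSqrt {n : ℕ} {A : Mat n} (hA : A.PosSemidef) : Mat n :=
  hA.1.eigenvectorUnitary.1 * diagonal ((↑) ∘ (√·) ∘ hA.1.eigenvalues) *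
    (star hA.1.eigenvectorUnitary : Mat n)

theorem psdSqrt_isHermitian {n : ℕ} {A : Mat n} (hA : A.PosSemidef) :
    (psdSqrt hA).IsHermitian := by
  unfold psdSqrt
  simp [Matrix.IsHermitian, Matrix.conjTranspose_mul, Matrix.diagonal_conjTranspose,
    Matrix.mul_assoc, Function.comp_def, Matrix.star_eq_conjTranspose, Pi.star_def,
    Complex.star_def]

/-- modulus |A| = sqrt (Aᴴ A) -/
noncomputable def matAbs {n : ℕ} (A : Mat n) : Mat n :=
  psdSqrt (Matrix.posSemidef_conjTranspose_mul_self A)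

/-- spectral (operator) norm -/
noncomputable def specNorm {n : ℕ} (A : Mat n) : ℝ :=
  ‖Matrix.toEuclideanCLM (𝕜 := ℂ) (n := Fin n) A‖

/-- Löwner order: `A ≤ B` iff `B - A` is positive semidefinite -/
def loewnerLE {n : ℕ} (A B : Mat n) : Prop := (B - A).PosSemidef

/-- singular values of `A`, arranged in non-increasing order -/
noncomputable def sval {n : ℕ} (A : Mat n) : Fin n → ℝ :=
  fun i =>
    let e := (psdSqrt_isHermitian (Matrix.posSemidef_conjTranspose_mul_self A)).eigenvalues
    (e ∘ Tuple.sort e) i.rev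

/-- singular values indexed by naturals (0 beyond the size) -/
noncomputable def svalNat {n : ℕ} (A : Mat n) (k : ℕ) : ℝ :=
  if h : k < n then sval A ⟨k, h⟩ else 0

/-- eigenvalues of a Hermitian matrix, arranged in non-increasing order -/
noncomputable def eigsDesc {n : ℕ} {A : Mat n} (hA : A.IsHermitian) : Fin n → ℝ :=
  fun i => (hA.eigenvalues ∘ Tuple.sort hA.eigenvalues) i.rev

namespace StmtZeroAux

open Polynomial

variable {n : ℕ}

lemma psdSqrt_sq_eq {A B : Mat n} (hB : B.PosSemidef) (hA : A.PosSemidef) (h : B ^ 2 = A) :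
    psdSqrt hA = B := by
  have e1 : psdSqrt hA = cfc Real.sqrt A := by rw [hA.1.cfc_eq]; rfl
  have hBs : IsSelfAdjoint B := hB.1
  subst h
  rw [e1, ← cfc_comp_pow (f := Real.sqrt) (n := 2) (hf := Real.continuous_sqrt.continuousOn) (ha := hBs)]
  conv_rhs => rw [← cfc_id' ℝ B (ha := hBs)]
  apply cfc_congr
  intro x hx
  rw [hB.1.spectrum_real_eq_range_eigenvalues] at hx
  obtain ⟨i, rfl⟩ := hx
  exact Real.sqrt_sq (hB.eigenvalues_nonneg i)

/-- conjugation by a unitary matrix, as an algebra equivalence -/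
def conjAE (V : Mat n) (h1 : V * Vᴴ = 1) (h2 : Vᴴ * V = 1) : Mat n ≃ₐ[ℂ] Mat n where
  toFun M := V * M * Vᴴ
  invFun M := Vᴴ * M * V
  left_inv M := by
    simp only [← mul_assoc, h2, one_mul]
    rw [mul_assoc, h2, mul_one]
  right_inv M := by
    simp only [← mul_assoc, h1, one_mul]
    rw [mul_assoc, h1, mul_one]
  map_mul' M N := by
    simp only [mul_assoc]
    rw [← mul_assoc Vᴴ V (N * Vᴴ), h2, one_mul]
  map_add' M N := by
    rw [mul_add, add_mul]
  commutes' c := by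
    rw [Algebra.algebraMap_eq_smul_one, mul_smul_comm, mul_one, smul_mul_assoc, h1]

lemma aeval_conj (V : Mat n) (h1 : V * Vᴴ = 1) (h2 : Vᴴ * V = 1) (D : Mat n) (p : ℂ[X]) :
    aeval (V * D * Vᴴ) p = V * aeval D p * Vᴴ :=
  Polynomial.aeval_algHom_apply (conjAE V h1 h2) D p

lemma aeval_diagonal (d : Fin n → ℂ) (p : ℂ[X]) :
    aeval (Matrix.diagonal d) p = Matrix.diagonal (fun i => aeval (d i) p) := by
  have h := Polynomial.aeval_algHom_apply (Matrix.diagonalAlgHom (n := Fin n) (α := ℂ) ℂ) d p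
  simp only [Matrix.diagonalAlgHom_apply] at h
  rw [h]
  have h2 : ((aeval d) p : Fin n → ℂ) = fun i => aeval (d i) p :=
    funext fun i => (Polynomial.aeval_algHom_apply (Pi.evalAlgHom ℂ (fun _ => ℂ) i) d p).symm
  rw [h2]

lemma aeval_ofReal (x : ℝ) (p : ℝ[X]) :
    aeval ((x : ℂ)) (p.map (algebraMap ℝ ℂ)) = ((p.eval x : ℝ) : ℂ) := by
  rw [Polynomial.aeval_map_algebraMap]
  have : (x : ℂ) = algebraMap ℝ ℂ x := rfl
  rw [this, Polynomial.aeval_algebraMap_apply_eq_algebraMap_eval, Complex.coe_algebraMap]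

lemma psd_conj_diag (V : Mat n) (d : Fin n → ℝ) (hd : ∀ i, 0 ≤ d i) :
    (V * Matrix.diagonal (fun i => (d i : ℂ)) * Vᴴ).PosSemidef :=
  Matrix.PosSemidef.mul_mul_conjTranspose_same
    (Matrix.posSemidef_diagonal_iff.mpr fun i => Complex.zero_le_real.mpr (hd i)) V

lemma arccos_cos_le_abs (t : ℝ) : Real.arccos (Real.cos t) ≤ |t| := by
  rw [← Real.cos_abs]
  rcases le_or_gt (|t|) Real.pi with h | h
  · rw [Real.arccos_cos (abs_nonneg t) h]
  · exact (Real.arccos_le_pi _).trans h.le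

/-- spectral theorem, coercion form -/
lemma spectral (X : Mat n) (hX : X.IsHermitian) :
    X = (hX.eigenvectorUnitary : Mat n) *
      Matrix.diagonal (fun i => (hX.eigenvalues i : ℂ)) * (hX.eigenvectorUnitary : Mat n)ᴴ := by
  have h := hX.spectral_theorem
  rw [Unitary.conjStarAlgAut_apply, Matrix.star_eq_conjTranspose] at h
  exact h

lemma unit_mul_star (X : Mat n) (hX : X.IsHermitian) :
    (hX.eigenvectorUnitary : Mat n) * (hX.eigenvectorUnitary : Mat n)ᴴ = 1 := by
  rw [← Matrix.star_eq_conjTranspose]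
  exact Unitary.mul_star_self_of_mem hX.eigenvectorUnitary.2

lemma unit_star_mul (X : Mat n) (hX : X.IsHermitian) :
    (hX.eigenvectorUnitary : Mat n)ᴴ * (hX.eigenvectorUnitary : Mat n) = 1 := by
  rw [← Matrix.star_eq_conjTranspose]
  exact Unitary.star_mul_self_of_mem hX.eigenvectorUnitary.2

/-- if `X = V D V^*`, `V` unitary, `D = diag(θ)` real, then `|X| = V diag(|θ|) V^*` -/
lemma matAbs_eq (X : Mat n) (V : Mat n) (h1 : V * Vᴴ = 1) (h2 : Vᴴ * V = 1) (θ : Fin n → ℝ)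
    (hXe : X = V * Matrix.diagonal (fun i => (θ i : ℂ)) * Vᴴ) :
    matAbs X = V * Matrix.diagonal (fun i => ((|θ i| : ℝ) : ℂ)) * Vᴴ := by
  have hpsd := psd_conj_diag V (fun i => |θ i|) (fun i => abs_nonneg _)
  have hsq : (V * Matrix.diagonal (fun i => ((|θ i| : ℝ) : ℂ)) * Vᴴ) ^ 2 = Xᴴ * X := by
    rw [hXe, Matrix.conjTranspose_mul, Matrix.conjTranspose_mul,
      Matrix.conjTranspose_conjTranspose, Matrix.diagonal_conjTranspose, pow_two]
    simp only [mul_assoc]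
    rw [← mul_assoc Vᴴ V, h2, one_mul, ← mul_assoc Vᴴ V, h2, one_mul]
    rw [← mul_assoc (Matrix.diagonal _) (Matrix.diagonal _),
      ← mul_assoc (Matrix.diagonal _) (Matrix.diagonal _),
      Matrix.diagonal_mul_diagonal, Matrix.diagonal_mul_diagonal]
    congr 2
    funext i
    simp only [Function.comp_apply, Pi.star_apply, Complex.star_def, Complex.conj_ofReal]
    simp only [← Complex.ofReal_mul, abs_mul_abs_self]
  exact (psdSqrt_sq_eq hpsd (Matrix.posSemidef_conjTranspose_mul_self X) hsq)

lemma eig_bound (X : Mat n) (hX : X.IsHermitian) (i : Fin n) :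
    |hX.eigenvalues i| ≤ specNorm X := by
  set b : EuclideanSpace ℂ (Fin n) := hX.eigenvectorBasis i with hb
  have hnb : ‖b‖ = 1 := hX.eigenvectorBasis.orthonormal.1 i
  have happ : Matrix.toEuclideanCLM (𝕜 := ℂ) X b = (hX.eigenvalues i : ℂ) • b := by
    apply (WithLp.equiv 2 (Fin n → ℂ)).injective
    show X *ᵥ (WithLp.equiv 2 (Fin n → ℂ)) b = ((hX.eigenvalues i : ℝ) : ℂ) • ((WithLp.equiv 2 (Fin n → ℂ)) b)
    have hsm : ((hX.eigenvalues i : ℝ) : ℂ) • ((WithLp.equiv 2 (Fin n → ℂ)) b)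
        = hX.eigenvalues i • ((WithLp.equiv 2 (Fin n → ℂ)) b) := by
      funext j
      simp [Complex.real_smul]
    rw [hsm]
    exact hX.mulVec_eigenvectorBasis i
  have hle : ‖Matrix.toEuclideanCLM (𝕜 := ℂ) X b‖ ≤ specNorm X * ‖b‖ :=
    (Matrix.toEuclideanCLM (𝕜 := ℂ) X).le_opNorm b
  rw [happ, norm_smul, hnb, mul_one, mul_one] at hle
  simpa using hle

lemma exp_eq (X : Mat n) (hX : X.IsHermitian) :
    NormedSpace.exp (Complex.I • X) = (hX.eigenvectorUnitary : Mat n) *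
      Matrix.diagonal (fun i => Complex.exp ((hX.eigenvalues i : ℂ) * Complex.I)) *
      (hX.eigenvectorUnitary : Mat n)ᴴ := by
  set V := (hX.eigenvectorUnitary : Mat n) with hV
  have h1 := unit_mul_star X hX
  have h2 := unit_star_mul X hX
  have hVu : IsUnit V := ⟨⟨V, Vᴴ, h1, h2⟩, rfl⟩
  have hinv : V⁻¹ = Vᴴ := Matrix.inv_eq_right_inv h1
  have hsm : Complex.I • X
      = V * Matrix.diagonal (fun i => (hX.eigenvalues i : ℂ) * Complex.I) * Vᴴ := by
    have hd : Complex.I • Matrix.diagonal (fun i : Fin n => (hX.eigenvalues i : ℂ))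
        = Matrix.diagonal (fun i => (hX.eigenvalues i : ℂ) * Complex.I) := by
      ext i j
      by_cases h : i = j <;> simp [Matrix.diagonal_apply, h, mul_comm]
    conv_lhs => rw [spectral X hX]
    rw [← smul_mul_assoc, ← mul_smul_comm, hd]
  have hconj : NormedSpace.exp
      (V * Matrix.diagonal (fun i => (hX.eigenvalues i : ℂ) * Complex.I) * Vᴴ)
      = V * NormedSpace.exp (Matrix.diagonal fun i => (hX.eigenvalues i : ℂ) * Complex.I)
        * Vᴴ := by
    rw [← hinv]
    exact Matrix.exp_conj V _ hVu
  rw [hsm, hconj, Matrix.exp_diagonal]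
  have hfun : NormedSpace.exp (fun i : Fin n => (hX.eigenvalues i : ℂ) * Complex.I)
      = fun i => Complex.exp ((hX.eigenvalues i : ℂ) * Complex.I) := by
    rw [Pi.exp_def, Complex.exp_eq_exp_ℂ]
  rw [hfun]

lemma cos_form (X : Mat n) (hX : X.IsHermitian) :
    NormedSpace.exp (Complex.I • X) + (NormedSpace.exp (Complex.I • X))ᴴ =
      (hX.eigenvectorUnitary : Mat n) *
        Matrix.diagonal (fun i => ((2 * Real.cos (hX.eigenvalues i) : ℝ) : ℂ)) *
        (hX.eigenvectorUnitary : Mat n)ᴴ := by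
  rw [exp_eq X hX, Matrix.conjTranspose_mul, Matrix.conjTranspose_mul,
    Matrix.conjTranspose_conjTranspose, Matrix.diagonal_conjTranspose]
  simp only [Matrix.mul_assoc]
  rw [← Matrix.mul_add, ← Matrix.add_mul, Matrix.diagonal_add]
  have hent : ∀ i : Fin n, Complex.exp ((hX.eigenvalues i : ℂ) * Complex.I) +
      star (Complex.exp ((hX.eigenvalues i : ℂ) * Complex.I)) =
      ((2 * Real.cos (hX.eigenvalues i) : ℝ) : ℂ) := by
    intro i
    rw [Complex.star_def, ← Complex.exp_conj,
      show (starRingEnd ℂ) ((hX.eigenvalues i : ℂ) * Complex.I)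
        = -(hX.eigenvalues i : ℂ) * Complex.I by simp,
      ← Complex.two_cos]
    push_cast [Complex.ofReal_cos]
    ring
  simp only [Pi.add_apply, Pi.star_apply, hent]

end StmtZeroAux

theorem stmt0 {n : ℕ} (X Y : Mat n) (hX : X.IsHermitian) (hY : Y.IsHermitian)
    (hexp : NormedSpace.exp (Complex.I • X) = NormedSpace.exp (Complex.I • Y))
    (hXn : specNorm X ≤ Real.pi) :
    loewnerLE (matAbs X) (matAbs Y) := by
  classical
  set V := (hX.eigenvectorUnitary : Mat n) with hV
  set W := (hY.eigenvectorUnitary : Mat n) with hW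
  set θ := hX.eigenvalues with hθ
  set μ := hY.eigenvalues with hμ
  have h1V := StmtZeroAux.unit_mul_star X hX
  have h2V := StmtZeroAux.unit_star_mul X hX
  have h1W := StmtZeroAux.unit_mul_star Y hY
  have h2W := StmtZeroAux.unit_star_mul Y hY
  set U := NormedSpace.exp (Complex.I • X) with hU
  have hC1 := StmtZeroAux.cos_form X hX
  have hC2 := StmtZeroAux.cos_form Y hY
  rw [← hexp] at hC2
  set S : Finset ℝ := (Finset.univ.image fun i => 2 * Real.cos (θ i)) ∪
      (Finset.univ.image fun i => 2 * Real.cos (μ i)) with hS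
  set r : ℝ → ℝ := fun t => Real.arccos (t / 2) with hr
  set p : Polynomial ℝ := Lagrange.interpolate S id r with hp
  have hpeval : ∀ t ∈ S, p.eval t = r t := by
    intro t ht
    exact Lagrange.eval_interpolate_at_node (r := r) (Set.injOn_id _) ht
  set q := p.map (algebraMap ℝ ℂ) with hq
  have habsX : matAbs X = V * Matrix.diagonal (fun i => ((|θ i| : ℝ) : ℂ)) * Vᴴ :=
    StmtZeroAux.matAbs_eq X V h1V h2V θ (StmtZeroAux.spectral X hX)
  have habsY : matAbs Y = W * Matrix.diagonal (fun i => ((|μ i| : ℝ) : ℂ)) * Wᴴ :=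
    StmtZeroAux.matAbs_eq Y W h1W h2W μ (StmtZeroAux.spectral Y hY)
  set M := Polynomial.aeval (U + Uᴴ) q with hM
  have hMX : M = matAbs X := by
    rw [hM, hq, hC1, StmtZeroAux.aeval_conj _ h1V h2V, StmtZeroAux.aeval_diagonal, habsX]
    have hfun : ∀ i : Fin n, Polynomial.aeval ((2 * Real.cos (θ i) : ℝ) : ℂ)
        (p.map (algebraMap ℝ ℂ)) = ((|θ i| : ℝ) : ℂ) := by
      intro i
      rw [StmtZeroAux.aeval_ofReal,
        hpeval _ (Finset.mem_union_left _ (Finset.mem_image_of_mem _ (Finset.mem_univ i)))]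
      congr 1
      rw [hr]
      show Real.arccos ((2 * Real.cos (θ i)) / 2) = |θ i|
      rw [show (2 * Real.cos (θ i)) / 2 = Real.cos (θ i) by ring, ← Real.cos_abs,
        Real.arccos_cos (abs_nonneg _) ((StmtZeroAux.eig_bound X hX i).trans hXn)]
    simp only [← hθ, ← hV, hfun]
  have hMY : M = W *
      Matrix.diagonal (fun i => ((Real.arccos (Real.cos (μ i)) : ℝ) : ℂ)) * Wᴴ := by
    rw [hM, hq, hC2, StmtZeroAux.aeval_conj _ h1W h2W, StmtZeroAux.aeval_diagonal]
    have hfun : ∀ i : Fin n, Polynomial.aeval ((2 * Real.cos (μ i) : ℝ) : ℂ)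
        (p.map (algebraMap ℝ ℂ)) = ((Real.arccos (Real.cos (μ i)) : ℝ) : ℂ) := by
      intro i
      rw [StmtZeroAux.aeval_ofReal,
        hpeval _ (Finset.mem_union_right _ (Finset.mem_image_of_mem _ (Finset.mem_univ i)))]
      congr 1
      rw [hr]
      show Real.arccos ((2 * Real.cos (μ i)) / 2) = Real.arccos (Real.cos (μ i))
      rw [show (2 * Real.cos (μ i)) / 2 = Real.cos (μ i) by ring]
    simp only [← hμ, ← hW, hfun]
  unfold loewnerLE
  rw [habsY, ← hMX, hMY]
  have hdiff : W * Matrix.diagonal (fun i => ((|μ i| : ℝ) : ℂ)) * Wᴴ -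
      W * Matrix.diagonal (fun i => ((Real.arccos (Real.cos (μ i)) : ℝ) : ℂ)) * Wᴴ =
      W * Matrix.diagonal
        (fun i => ((|μ i| - Real.arccos (Real.cos (μ i)) : ℝ) : ℂ)) * Wᴴ := by
    rw [← Matrix.sub_mul, ← Matrix.mul_sub, Matrix.diagonal_sub]
    simp only [Complex.ofReal_sub]
  rw [hdiff]
  exact StmtZeroAux.psd_conj_diag W _
    (fun i => sub_nonneg.mpr (StmtZeroAux.arccos_cos_le_abs (μ i)))

end
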